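/- Let g : ℝⁿ → ℝ be convex, μ > 0, p ≥ 1. Suppose λ* ≠ 0 is a global minimizer of φ(λ) = g(λ) + (μ/(1+1/p))·‖λ‖^{1+1/p}, let λᵏ ∈ ℝⁿ with λᵏ ≠ 0, and let λᵏ⁺¹ be a global minimizer of λ ↦ g(λ) + (μ/2)·‖λᵏ‖^{(1/p)−1}·‖λ‖². Then (‖λᵏ‖^{1−1/p} − ‖λ*‖^{1−1/p})·(‖λᵏ‖^{1−1/p} − ‖λᵏ⁺¹‖^{1−1/p}) ≥ 0. -/

import Mathlib

/-- Pure real-number part: from the combined optimality inequality, conclude that `b`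
lies between `s` and `a`, hence the monotonicity product is nonnegative. -/
lemma fixed_point_aux (μ q a s b : ℝ) (hμ : 0 < μ) (hq0 : 0 < q) (hq1 : q ≤ 1)
    (ha : 0 < a) (hs : 0 < s) (hb0 : 0 ≤ b)
    (key2 : 0 ≤ μ / (1 + q) * (b ^ (1+q) - s ^ (1+q))
      + 2 * (μ / 2 * a ^ (q - 1)) * (b * s - b ^ 2)) :
    (a ^ (1 - q) - s ^ (1 - q)) * (a ^ (1 - q) - b ^ (1 - q)) ≥ 0 := by
  have h1q : (1:ℝ) ≤ 1 + q := by linarith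
  have hc : 0 < μ / (1 + q) := by positivity
  have hd : 0 < μ / 2 * a ^ (q - 1) := by
    have := Real.rpow_pos_of_pos ha (q - 1)
    positivity
  have hb : 0 < b := by
    rcases lt_or_eq_of_le hb0 with h | h
    · exact h
    · exfalso
      rw [← h, Real.zero_rpow (by linarith : (1:ℝ) + q ≠ 0)] at key2
      norm_num at key2
      nlinarith [key2, mul_pos hc (Real.rpow_pos_of_pos hs (1 + q))]
  -- tangent line inequality for the convex function x ↦ x^(1+q)
  have hbq : b ^ ((1:ℝ)+q) = b * b ^ q := by
    rw [Real.rpow_add hb, Real.rpow_one]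
  have htan : b ^ ((1:ℝ)+q) - s ^ ((1:ℝ)+q) ≤ (1+q) * b ^ q * (b - s) := by
    have hsb : 0 < s / b := div_pos hs hb
    have hu : (-1:ℝ) ≤ s / b - 1 := by linarith
    have hber := one_add_mul_self_le_rpow_one_add hu h1q
    have hbp : (0:ℝ) < b ^ ((1:ℝ)+q) := Real.rpow_pos_of_pos hb _
    have hmul := mul_le_mul_of_nonneg_right hber hbp.le
    have hrhs : (1 + (s / b - 1)) ^ ((1:ℝ)+q) * b ^ ((1:ℝ)+q) = s ^ ((1:ℝ)+q) := by
      rw [← Real.mul_rpow (by linarith) hb.le]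
      congr 1
      field_simp
      ring
    rw [hrhs] at hmul
    have hexp : (1 + (1 + q) * (s / b - 1)) * b ^ ((1:ℝ)+q)
        = b ^ ((1:ℝ)+q) + (1 + q) * b ^ q * (s - b) := by
      rw [hbq]
      field_simp
    rw [hexp] at hmul
    linarith
  -- the key sign inequality: (b - s) * (a^(q-1) - b^(q-1)) ≤ 0
  have hstar2 : (b - s) * (a ^ (q-1) - b ^ (q-1)) ≤ 0 := by
    have hcq : μ / (1 + q) * (1 + q) = μ := by field_simp
    have h4 : μ / (1 + q) * (b ^ ((1:ℝ)+q) - s ^ ((1:ℝ)+q))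
        ≤ μ / (1 + q) * ((1+q) * b ^ q * (b - s)) :=
      mul_le_mul_of_nonneg_left htan hc.le
    have hbq2 : b ^ q = b * b ^ (q - 1) := by
      have h := Real.rpow_add hb 1 (q - 1)
      rw [Real.rpow_one] at h
      rw [show (1:ℝ) + (q - 1) = q by ring] at h
      exact h
    have hne : (1:ℝ) + q ≠ 0 := by linarith
    have h5 : μ / (1 + q) * ((1+q) * b ^ q * (b - s)) = μ * (b * b ^ (q-1)) * (b - s) := by
      rw [hbq2]
      field_simp
    have h7 : μ * b * ((b - s) * (a ^ (q-1) - b ^ (q-1))) ≤ 0 := by nlinarith [key2, h4, h5]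
    have h8 : 0 < μ * b := by positivity
    by_contra h'
    push_neg at h'
    nlinarith [mul_pos h8 h', h7]
  -- conclusion
  rcases eq_or_lt_of_le hq1 with hq | hq
  · subst hq
    norm_num [Real.rpow_zero]
  · have he : 0 ≤ 1 - q := by linarith
    rcases le_total s a with hsa | hsa
    · have hba : b ≤ a := by
        by_contra h'
        push_neg at h'
        have h1 : b ^ (q-1) < a ^ (q-1) :=
          Real.rpow_lt_rpow_of_neg ha h' (by linarith)
        nlinarith [hstar2, mul_pos (show 0 < b - s by linarith)
          (show 0 < a ^ (q-1) - b ^ (q-1) by linarith)]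
      have f1 : s ^ (1-q) ≤ a ^ (1-q) := Real.rpow_le_rpow hs.le hsa he
      have f2 : b ^ (1-q) ≤ a ^ (1-q) := Real.rpow_le_rpow hb.le hba he
      have := mul_nonneg (sub_nonneg.2 f1) (sub_nonneg.2 f2)
      linarith
    · have hab : a ≤ b := by
        by_contra h'
        push_neg at h'
        have h1 : a ^ (q-1) < b ^ (q-1) :=
          Real.rpow_lt_rpow_of_neg hb h' (by linarith)
        nlinarith [hstar2, mul_pos (show 0 < s - b by linarith)
          (show 0 < b ^ (q-1) - a ^ (q-1) by linarith)]
      have f1 : a ^ (1-q) ≤ s ^ (1-q) := Real.rpow_le_rpow ha.le hsa he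
      have f2 : a ^ (1-q) ≤ b ^ (1-q) := Real.rpow_le_rpow ha.le hab he
      have h := mul_nonneg (sub_nonneg.2 f1) (sub_nonneg.2 f2)
      nlinarith [h]

/-- One step of the fixed point iteration satisfies
`(‖λᵏ‖^{1−1/p} − ‖λ*‖^{1−1/p})(‖λᵏ‖^{1−1/p} − ‖λᵏ⁺¹‖^{1−1/p}) ≥ 0`. -/
theorem fixed_point_iteration_pow_monotone
    (n : ℕ) (g : EuclideanSpace ℝ (Fin n) → ℝ)
    (hg : ConvexOn ℝ Set.univ g) (μ p : ℝ) (hμ : 0 < μ) (hp : 1 ≤ p)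
    (lamstar : EuclideanSpace ℝ (Fin n)) (hstar0 : lamstar ≠ 0)
    (hstar : ∀ z : EuclideanSpace ℝ (Fin n),
      g lamstar + μ / (1 + 1 / p) * ‖lamstar‖ ^ (1 + 1 / p) ≤
        g z + μ / (1 + 1 / p) * ‖z‖ ^ (1 + 1 / p))
    (lamk lamk1 : EuclideanSpace ℝ (Fin n)) (hk : lamk ≠ 0)
    (hmin : ∀ z : EuclideanSpace ℝ (Fin n),
      g lamk1 + μ / 2 * ‖lamk‖ ^ (1 / p - 1) * ‖lamk1‖ ^ 2 ≤
        g z + μ / 2 * ‖lamk‖ ^ (1 / p - 1) * ‖z‖ ^ 2) :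
    (‖lamk‖ ^ (1 - 1 / p) - ‖lamstar‖ ^ (1 - 1 / p)) *
      (‖lamk‖ ^ (1 - 1 / p) - ‖lamk1‖ ^ (1 - 1 / p)) ≥ 0 := by
  have hp0 : (0:ℝ) < p := lt_of_lt_of_le one_pos hp
  have hq0 : 0 < 1 / p := by positivity
  have hq1 : 1 / p ≤ 1 := (div_le_one hp0).2 hp
  have ha : 0 < ‖lamk‖ := norm_pos_iff.2 hk
  have hs : 0 < ‖lamstar‖ := norm_pos_iff.2 hstar0
  have hc : 0 < μ / (1 + 1/p) := by positivity
  have hd : 0 < μ / 2 * ‖lamk‖ ^ (1/p - 1) := by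
    have := Real.rpow_pos_of_pos ha (1/p - 1)
    positivity
  -- Step 1: the key inequality, by testing `hmin` along the segment and letting t → 0
  have key : 0 ≤ μ / (1 + 1/p) * (‖lamk1‖ ^ (1+1/p) - ‖lamstar‖ ^ (1+1/p))
      + 2 * (μ / 2 * ‖lamk‖ ^ (1/p - 1)) * (inner ℝ lamk1 (lamstar - lamk1) : ℝ) := by
    have keyT : ∀ t : ℝ, 0 < t → t ≤ 1 →
        0 ≤ μ / (1 + 1/p) * (‖lamk1‖ ^ (1+1/p) - ‖lamstar‖ ^ (1+1/p))
          + 2 * (μ / 2 * ‖lamk‖ ^ (1/p - 1)) * (inner ℝ lamk1 (lamstar - lamk1) : ℝ)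
          + t * (μ / 2 * ‖lamk‖ ^ (1/p - 1) * ‖lamstar - lamk1‖ ^ 2) := by
      intro t ht ht1
      have h1 := hstar lamk1
      have h2 := hmin (lamk1 + t • (lamstar - lamk1))
      have heq : lamk1 + t • (lamstar - lamk1) = (1 - t) • lamk1 + t • lamstar := by
        module
      have hconv := hg.2 (Set.mem_univ lamk1) (Set.mem_univ lamstar)
        (by linarith : (0:ℝ) ≤ 1 - t) ht.le (by ring)
      simp only [smul_eq_mul] at hconv
      rw [heq] at h2
      have hnorm : ‖(1 - t) • lamk1 + t • lamstar‖ ^ 2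
          = ‖lamk1‖ ^ 2 + 2 * t * (inner ℝ lamk1 (lamstar - lamk1) : ℝ)
            + t ^ 2 * ‖lamstar - lamk1‖ ^ 2 := by
        rw [← heq, norm_add_sq_real, real_inner_smul_right, norm_smul,
          Real.norm_eq_abs, abs_of_pos ht]
        ring
      rw [hnorm] at h2
      have hB : t * (g lamstar - g lamk1)
          ≤ t * (μ / (1 + 1/p) * (‖lamk1‖ ^ (1+1/p) - ‖lamstar‖ ^ (1+1/p))) := by
        apply mul_le_mul_of_nonneg_left _ ht.le
        linarith
      have hmain : 0 ≤ t * (μ / (1 + 1/p) * (‖lamk1‖ ^ (1+1/p) - ‖lamstar‖ ^ (1+1/p))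
          + 2 * (μ / 2 * ‖lamk‖ ^ (1/p - 1)) * (inner ℝ lamk1 (lamstar - lamk1) : ℝ)
          + t * (μ / 2 * ‖lamk‖ ^ (1/p - 1) * ‖lamstar - lamk1‖ ^ 2)) := by
        nlinarith [h2, hconv, hB]
      nlinarith [hmain, ht]
    by_contra hK
    push_neg at hK
    set K := μ / (1 + 1/p) * (‖lamk1‖ ^ (1+1/p) - ‖lamstar‖ ^ (1+1/p))
      + 2 * (μ / 2 * ‖lamk‖ ^ (1/p - 1)) * (inner ℝ lamk1 (lamstar - lamk1) : ℝ) with hKdef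
    set C := μ / 2 * ‖lamk‖ ^ (1/p - 1) * ‖lamstar - lamk1‖ ^ 2 with hCdef
    have hC : 0 ≤ C := by
      rw [hCdef]
      have := Real.rpow_pos_of_pos ha (1/p - 1)
      positivity
    clear_value K C
    obtain ⟨e, he⟩ : ∃ e : ℝ, e = -K / (2 * (C + 1)) := ⟨_, rfl⟩
    have he0 : 0 < e := by
      rw [he]
      exact div_pos (by linarith) (by linarith)
    have ht0 : 0 < min 1 e := lt_min one_pos he0
    have h1 := keyT _ ht0 (min_le_left _ _)
    have h2 : min 1 e * C ≤ e * C :=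
      mul_le_mul_of_nonneg_right (min_le_right _ _) hC
    have h3 : e * C ≤ -K / 2 := by
      rw [he, div_mul_eq_mul_div, div_le_div_iff₀ (by linarith) (by norm_num)]
      nlinarith
    linarith
  -- Step 2: Cauchy–Schwarz on the inner product term
  have hinner : (inner ℝ lamk1 (lamstar - lamk1) : ℝ) ≤ ‖lamk1‖ * ‖lamstar‖ - ‖lamk1‖ ^ 2 := by
    rw [inner_sub_right, real_inner_self_eq_norm_sq]
    have := real_inner_le_norm lamk1 lamstar
    linarith
  have key2 : 0 ≤ μ / (1 + 1/p) * (‖lamk1‖ ^ (1+1/p) - ‖lamstar‖ ^ (1+1/p))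
      + 2 * (μ / 2 * ‖lamk‖ ^ (1/p - 1)) * (‖lamk1‖ * ‖lamstar‖ - ‖lamk1‖ ^ 2) := by
    nlinarith [key, hinner, hd]
  exact fixed_point_aux μ (1/p) ‖lamk‖ ‖lamstar‖ ‖lamk1‖ hμ hq0 hq1 ha hs
    (norm_nonneg lamk1) key2
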